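/- arXiv:0812.2734 — 2 statements merged into one kernel-verified Lean document; each statement's English description precedes it below -/
import Mathlib

section
/- Every minimal separator of a chordal graph is the intersection of two maximal cliques. -/
open SimpleGraph

variable {V : Type*}

/-- A graph is chordal if it contains no induced cycle of length at least four. -/
def IsChordal (G : SimpleGraph V) : Prop :=
  ∀ n : ℕ, 4 ≤ n → IsEmpty (SimpleGraph.cycleGraph n ↪g G)

/-- `S` separates `u` from `v`: every walk from `u` to `v` meets `S`, and `u, v ∉ S`. -/
def IsSeparator (G : SimpleGraph V) (u v : V) (S : Set V) : Prop :=
  u ∉ S ∧ v ∉ S ∧ ∀ p : G.Walk u v, ∃ x ∈ p.support, x ∈ S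

/-- A `{u,v}`-separator: a separator of `u,v` minimal with this property. -/
def IsMinUVSeparator (G : SimpleGraph V) (u v : V) (S : Set V) : Prop :=
  IsSeparator G u v S ∧ ∀ T, T ⊂ S → ¬ IsSeparator G u v T

/-- A minimal separator: a `{u,v}`-separator for some non-adjacent pair `u ≠ v`. -/
def IsMinimalSeparator (G : SimpleGraph V) (S : Set V) : Prop :=
  ∃ u v, u ≠ v ∧ ¬ G.Adj u v ∧ IsMinUVSeparator G u v S

/-- A maximal clique. -/
def IsMaxClique (G : SimpleGraph V) (Q : Set V) : Prop :=
  G.IsClique Q ∧ ∀ R, G.IsClique R → Q ⊆ R → Q = R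

abbrev MaxClique (G : SimpleGraph V) := {Q : Set V // IsMaxClique G Q}

/-- A clique tree of `G`: a tree on the maximal cliques of `G` such that for every
vertex `v` the maximal cliques containing `v` induce a (nonempty connected) subtree. -/
structure CliqueTree (G : SimpleGraph V) where
  tree : SimpleGraph (MaxClique G)
  isTree : tree.IsTree
  subtree : ∀ v : V, ((tree.induce {Q : MaxClique G | v ∈ Q.1})).Connected

/-- An asteroidal triple: three pairwise non-adjacent vertices such that any two are
joined by a path avoiding the closed neighborhood of the third. -/
def IsAsteroidalTriple (G : SimpleGraph V) (a b c : V) : Prop :=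
  a ≠ b ∧ b ≠ c ∧ a ≠ c ∧ ¬ G.Adj a b ∧ ¬ G.Adj b c ∧ ¬ G.Adj a c ∧
  (∃ p : G.Walk a b, ∀ x ∈ p.support, x ≠ c ∧ ¬ G.Adj c x) ∧
  (∃ p : G.Walk b c, ∀ x ∈ p.support, x ≠ a ∧ ¬ G.Adj a x) ∧
  (∃ p : G.Walk a c, ∀ x ∈ p.support, x ≠ b ∧ ¬ G.Adj b x)


section
open SimpleGraph Walk
namespace ChordalAux
variable {V : Type*} {G : SimpleGraph V}

/-- Take the first `n` darts of a walk. -/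
def takeW : {a b : V} → (p : G.Walk a b) → (n : ℕ) → G.Walk a (p.getVert n)
  | _, _, .nil, _ => .nil
  | _, _, .cons _ _, 0 => .nil
  | _, _, .cons h q, n+1 => .cons h (takeW q n)

lemma length_takeW : ∀ {a b : V} (p : G.Walk a b) (n : ℕ), (takeW p n).length = min n p.length
  | _, _, .nil, n => by simp [takeW]
  | _, _, .cons _ _, 0 => by simp [takeW]; rfl
  | _, _, .cons h q, n+1 => by
      simp [takeW, length_takeW q n, Nat.succ_min_succ]

lemma support_takeW_subset : ∀ {a b : V} (p : G.Walk a b) (n : ℕ),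
    (takeW p n).support ⊆ p.support
  | _, _, .nil, n => by simp [takeW]
  | _, _, .cons _ _, 0 => by simp [takeW]; exact fun y hy => by cases hy with | head => simp | tail _ h => cases h
  | _, _, .cons h q, n+1 => by
      intro x hx
      simp only [takeW, support_cons, List.mem_cons] at hx ⊢
      have hx' : x ∈ _ :: (takeW q n).support := hx
      exact (List.mem_cons.mp hx').imp id (fun h' => support_takeW_subset q n h')

lemma length_drop : ∀ {a b : V} (p : G.Walk a b) (n : ℕ), (p.drop n).length = p.length - n
  | _, _, .nil, n => by simp [drop]
  | _, _, .cons _ _, 0 => by simp [drop]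
  | _, _, .cons h q, n+1 => by
      simp [drop, length_drop q n]

lemma support_drop_subset : ∀ {a b : V} (p : G.Walk a b) (n : ℕ),
    (p.drop n).support ⊆ p.support
  | _, _, .nil, n => by simp [drop, Walk.getVert]
  | _, _, .cons _ _, 0 => by simp [drop]
  | _, _, .cons h q, n+1 => by
      intro x hx
      simp only [drop, support_copy, support_cons, List.mem_cons] at hx ⊢
      exact Or.inr (support_drop_subset q n hx)

end ChordalAux

namespace ChordalAux
variable {V : Type*} {G : SimpleGraph V}

lemma shorter_of_eq {a b : V} (p : G.Walk a b) {i j : ℕ} (hij : i < j) (hj : j ≤ p.length)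
    (h : p.getVert i = p.getVert j) :
    ∃ q : G.Walk a b, (∀ x ∈ q.support, x ∈ p.support) ∧ q.length < p.length := by
  refine ⟨(takeW p i).append ((p.drop j).copy h.symm rfl), ?_, ?_⟩
  · intro x hx
    rw [Walk.mem_support_append_iff] at hx
    rcases hx with hx | hx
    · exact support_takeW_subset p i hx
    · rw [Walk.support_copy] at hx
      exact support_drop_subset p j hx
  · rw [Walk.length_append, Walk.length_copy, length_takeW, length_drop]
    omega

lemma shorter_of_adj {a b : V} (p : G.Walk a b) {i j : ℕ} (hij : i + 1 < j) (hj : j ≤ p.length)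
    (h : G.Adj (p.getVert i) (p.getVert j)) :
    ∃ q : G.Walk a b, (∀ x ∈ q.support, x ∈ p.support) ∧ q.length < p.length := by
  refine ⟨(takeW p i).append (.cons h (p.drop j)), ?_, ?_⟩
  · intro x hx
    rw [Walk.mem_support_append_iff] at hx
    rcases hx with hx | hx
    · exact support_takeW_subset p i hx
    · rw [Walk.support_cons, List.mem_cons] at hx
      rcases hx with rfl | hx
      · exact Walk.mem_support_iff_exists_getVert.mpr ⟨i, rfl, by omega⟩
      · exact support_drop_subset p j hx
  · rw [Walk.length_append, Walk.length_cons, length_takeW, length_drop]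
    omega

/-- Existence of a minimal walk within a set `K`, which is automatically an induced path. -/
lemma exists_minWalk (K : Set V) {a b : V} (hw : ∃ p : G.Walk a b, ∀ x ∈ p.support, x ∈ K) :
    ∃ p : G.Walk a b, (∀ x ∈ p.support, x ∈ K) ∧
      (∀ i j, i < j → j ≤ p.length → p.getVert i ≠ p.getVert j) ∧
      (∀ i j, i + 1 < j → j ≤ p.length → ¬ G.Adj (p.getVert i) (p.getVert j)) ∧
      (∀ q : G.Walk a b, (∀ x ∈ q.support, x ∈ K) → p.length ≤ q.length) := by
  classical
  have hne : ∃ n, ∃ p : G.Walk a b, p.length = n ∧ ∀ x ∈ p.support, x ∈ K := by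
    obtain ⟨p, hp⟩ := hw
    exact ⟨p.length, p, rfl, hp⟩
  obtain ⟨p, hlen, hK⟩ := Nat.find_spec hne
  have hmin : ∀ q : G.Walk a b, (∀ x ∈ q.support, x ∈ K) → p.length ≤ q.length := by
    intro q hq
    rw [hlen]
    exact Nat.find_le ⟨q, rfl, hq⟩
  refine ⟨p, hK, ?_, ?_, hmin⟩
  · intro i j hij hj heq
    obtain ⟨q, hq1, hq2⟩ := shorter_of_eq p hij hj heq
    exact absurd (hmin q fun x hx => hK x (hq1 x hx)) (by omega)
  · intro i j hij hj hadj
    obtain ⟨q, hq1, hq2⟩ := shorter_of_adj p hij hj hadj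
    exact absurd (hmin q fun x hx => hK x (hq1 x hx)) (by omega)

end ChordalAux


namespace ChordalAux
variable {V : Type*} {G : SimpleGraph V}

lemma fin_eq_add_one_iff {m : ℕ} {u v : Fin (m + 2)} :
    u = v + 1 ↔ (u.val = v.val + 1 ∨ (v.val = m + 1 ∧ u.val = 0)) := by
  rw [Fin.ext_iff, Fin.add_def]
  have h1 : (1 : Fin (m+2)).val = 1 := rfl
  rw [h1]
  have hv : v.val < m + 2 := v.isLt
  have hu : u.val < m + 2 := u.isLt
  simp only [Fin.val_mk]
  rcases Nat.lt_or_ge (v.val + 1) (m + 2) with h | h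
  · rw [Nat.mod_eq_of_lt h]; omega
  · have hvn : v.val + 1 = m + 2 := by omega
    rw [hvn, Nat.mod_self]; omega

lemma cg_adj {m : ℕ} {u v : Fin (m + 2)} :
    (cycleGraph (m + 2)).Adj u v ↔ u = v + 1 ∨ v = u + 1 := by
  rw [cycleGraph_adj]
  constructor
  · rintro (h | h)
    · left; rw [sub_eq_iff_eq_add] at h; rw [h]; exact add_comm 1 v
    · right; rw [sub_eq_iff_eq_add] at h; rw [h]; exact add_comm 1 u
  · rintro (h | h)
    · left; rw [h]; exact add_sub_cancel_left v 1
    · right; rw [h]; exact add_sub_cancel_left u 1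

lemma cg_adj_val {m : ℕ} {u v : Fin (m + 2)} :
    (cycleGraph (m + 2)).Adj u v ↔
      (u.val = v.val + 1 ∨ v.val = u.val + 1 ∨
        (v.val = m + 1 ∧ u.val = 0) ∨ (u.val = m + 1 ∧ v.val = 0)) := by
  rw [cg_adj, fin_eq_add_one_iff, fin_eq_add_one_iff]
  tauto

end ChordalAux

namespace ChordalAux
variable {V : Type*} {G : SimpleGraph V}

lemma no_double_path (hG : IsChordal G) {s t : V} (p1 p2 : G.Walk s t)
    (h1 : 2 ≤ p1.length) (h2 : 2 ≤ p2.length)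
    (i1 : ∀ i j, i < j → j ≤ p1.length → p1.getVert i ≠ p1.getVert j)
    (a1 : ∀ i j, i + 1 < j → j ≤ p1.length → ¬ G.Adj (p1.getVert i) (p1.getVert j))
    (i2 : ∀ i j, i < j → j ≤ p2.length → p2.getVert i ≠ p2.getVert j)
    (a2 : ∀ i j, i + 1 < j → j ≤ p2.length → ¬ G.Adj (p2.getVert i) (p2.getVert j))
    (hd : ∀ i j, 0 < i → i < p1.length → 0 < j → j < p2.length →
      p1.getVert i ≠ p2.getVert j)
    (hc : ∀ i j, 0 < i → i < p1.length → 0 < j → j < p2.length →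
      ¬ G.Adj (p1.getVert i) (p2.getVert j)) :
    False := by
  set k := p1.length with hk
  set m := p2.length with hm
  -- the cyclic sequence of vertices
  set g : ℕ → V := fun i => if i ≤ k then p1.getVert i else p2.getVert (k + m - i) with hg
  have hgs : g 0 = s := by simp [hg, Walk.getVert_zero]
  have hp2s : p2.getVert 0 = s := Walk.getVert_zero p2
  have hp1t : p1.getVert k = t := Walk.getVert_length p1
  have hp2t : p2.getVert m = t := Walk.getVert_length p2
  have hss : p1.getVert 0 = p2.getVert 0 := (p1.getVert_zero).trans (p2.getVert_zero).symm
  have htt : p1.getVert k = p2.getVert m := hp1t.trans hp2t.symm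
  have hgval : ∀ i, k < i → g i = p2.getVert (k + m - i) := by
    intro i hi; simp only [hg]; rw [if_neg (by omega)]
  have hgval' : ∀ i, i ≤ k → g i = p1.getVert i := by
    intro i hi; simp only [hg]; rw [if_pos hi]
  -- injectivity of the cyclic sequence
  have keyinj : ∀ i j, i < j → j < k + m → g i ≠ g j := by
    intro i j hij hj
    by_cases hjk : j ≤ k
    · rw [hgval' i (by omega), hgval' j hjk]
      exact i1 i j hij hjk
    · have hbj : 1 ≤ k + m - j ∧ k + m - j ≤ m - 1 := by omega
      rw [hgval j (by omega)]
      by_cases hik : i ≤ k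
      · rw [hgval' i hik]
        rcases Nat.eq_or_lt_of_le (Nat.zero_le i) with h0 | h0
        · rw [← h0, hss]
          exact (i2 0 (k + m - j) (by omega) (by omega)).symm ∘ Eq.symm
        · rcases Nat.eq_or_lt_of_le hik with hikk | hikk
          · rw [hikk, htt]
            intro h
            exact i2 (k + m - j) m (by omega) le_rfl h.symm
          · exact hd i (k + m - j) h0 hikk (by omega) (by omega)
      · rw [hgval i (by omega)]
        exact fun h => i2 (k + m - j) (k + m - i) (by omega) (by omega) h.symm
  -- adjacency in the cyclic sequence
  have key : ∀ i j, i < j → j < k + m →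
      (G.Adj (g i) (g j) ↔ (j = i + 1 ∨ (i = 0 ∧ j = k + m - 1))) := by
    intro i j hij hj
    by_cases hjk : j ≤ k
    · rw [hgval' i (by omega), hgval' j hjk]
      constructor
      · intro hadj
        rcases Nat.lt_or_ge (i + 1) j with h | h
        · exact absurd hadj (a1 i j h hjk)
        · left; omega
      · rintro (rfl | ⟨rfl, hj'⟩)
        · exact p1.adj_getVert_succ (by omega)
        · omega
    · have hbj : 1 ≤ k + m - j ∧ k + m - j ≤ m - 1 := by omega
      rw [hgval j (by omega)]
      by_cases hik : i ≤ k
      · rw [hgval' i hik]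
        rcases Nat.eq_or_lt_of_le (Nat.zero_le i) with h0 | h0
        · rw [← h0, hss]
          constructor
          · intro hadj
            rcases Nat.lt_or_ge (0 + 1) (k + m - j) with h | h
            · exact absurd hadj (a2 0 (k + m - j) h (by omega))
            · right; omega
          · rintro (h | ⟨-, h⟩)
            · omega
            · have : k + m - j = 1 := by omega
              rw [this]
              exact p2.adj_getVert_succ (by omega)
        · rcases Nat.eq_or_lt_of_le hik with hikk | hikk
          · rw [hikk, htt]
            constructor
            · intro hadj
              rcases Nat.lt_or_ge (k + m - j + 1) m with h | h
              · exact absurd hadj.symm (a2 (k + m - j) m h le_rfl)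
              · left; omega
            · rintro (h | ⟨h0', -⟩)
              · have hbm : k + m - j = m - 1 := by omega
                rw [hbm]
                have := p2.adj_getVert_succ (i := m - 1) (by omega)
                rw [show m - 1 + 1 = m by omega] at this
                exact this.symm
              · omega
          · constructor
            · intro hadj
              exact absurd hadj (hc i (k + m - j) h0 hikk (by omega) (by omega))
            · rintro (h | ⟨h0', -⟩) <;> omega
      · rw [hgval i (by omega)]
        have hai : 1 ≤ k + m - i ∧ k + m - i ≤ m - 1 := by omega
        constructor
        · intro hadj
          rcases Nat.lt_or_ge (k + m - j + 1) (k + m - i) with h | h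
          · exact absurd hadj.symm (a2 (k + m - j) (k + m - i) h (by omega))
          · left; omega
        · rintro (rfl | ⟨h0', -⟩)
          · have : k + m - (i + 1) + 1 = k + m - i := by omega
            have h' := p2.adj_getVert_succ (i := k + m - (i + 1)) (by omega)
            rw [this] at h'
            exact h'.symm
          · omega
  -- build the cycle embedding
  obtain ⟨n', hn'⟩ : ∃ n', k + m = n' + 2 := ⟨k + m - 2, by omega⟩
  have hn4 : 4 ≤ n' + 2 := by omega
  have emb : cycleGraph (n' + 2) ↪g G := by
    refine ⟨⟨fun i => g i.val, ?_⟩, ?_⟩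
    · intro u v huv
      by_contra hne
      rcases lt_trichotomy u.val v.val with h | h | h
      · exact keyinj u.val v.val h (by omega) huv
      · exact hne (Fin.ext h)
      · exact keyinj v.val u.val h (by omega) huv.symm
    · intro u v
      rw [cg_adj_val]
      show G.Adj (g u.val) (g v.val) ↔ _
      rcases lt_trichotomy u.val v.val with h | h | h
      · rw [key u.val v.val h (by omega)]
        constructor
        · rintro (h' | ⟨h0, h1'⟩)
          · right; left; omega
          · right; right; left; omega
        · rintro (h' | h' | ⟨ha, hb⟩ | ⟨ha, hb⟩) <;> [omega; omega; (right; exact ⟨hb, by omega⟩); omega]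
      · have huv : u = v := Fin.ext h
        subst huv
        simp only [SimpleGraph.irrefl, false_iff]
        omega
      · rw [G.adj_comm, key v.val u.val h (by omega)]
        constructor
        · rintro (h' | ⟨h0, h1'⟩)
          · left; omega
          · right; right; right; omega
        · rintro (h' | h' | ⟨ha, hb⟩ | ⟨ha, hb⟩) <;> [omega; omega; omega; (right; exact ⟨hb, by omega⟩)]
  exact (hG (n' + 2) hn4).false emb

end ChordalAux


namespace ChordalAux
variable {V : Type*} {G : SimpleGraph V} {S : Set V} {u v x y w : V}

/-- reachability avoiding `S`. -/
def Reach (G : SimpleGraph V) (S : Set V) (u x : V) : Prop :=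
  ∃ p : G.Walk u x, ∀ y ∈ p.support, y ∉ S

lemma Reach.self (hu : u ∉ S) : Reach G S u u :=
  ⟨Walk.nil, by simp [hu]⟩

lemma Reach.not_mem (h : Reach G S u x) : x ∉ S := by
  obtain ⟨p, hp⟩ := h
  exact hp x p.end_mem_support

lemma Reach.start_not_mem (h : Reach G S u x) : u ∉ S := by
  obtain ⟨p, hp⟩ := h
  exact hp u p.start_mem_support

lemma Reach.symm (h : Reach G S u x) : Reach G S x u := by
  obtain ⟨p, hp⟩ := h
  exact ⟨p.reverse, by simpa using hp⟩

lemma Reach.trans (h : Reach G S u x) (h' : Reach G S x y) : Reach G S u y := by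
  obtain ⟨p, hp⟩ := h
  obtain ⟨q, hq⟩ := h'
  refine ⟨p.append q, fun z hz => ?_⟩
  rw [Walk.mem_support_append_iff] at hz
  exact hz.elim (hp z) (hq z)

lemma Reach.adj (h : Reach G S u x) (hadj : G.Adj x w) (hw : w ∉ S) : Reach G S u w :=
  h.trans ⟨Walk.cons hadj Walk.nil, by
    intro y hy
    simp only [Walk.support_cons, Walk.support_nil, List.mem_cons, List.mem_singleton] at hy
    rcases hy with rfl | rfl | h'
    · exact h.not_mem
    · exact hw
    · exact absurd h' List.not_mem_nil⟩

lemma Reach.of_walk_support (h : Reach G S u w) (p : G.Walk w x)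
    (hp : ∀ y ∈ p.support, y ∉ S) : ∀ y ∈ p.support, Reach G S u y := by
  induction p with
  | nil => intro y hy; rw [Walk.mem_support_nil_iff] at hy; subst hy; exact h
  | @cons a b c hadj q ih =>
      intro y hy
      have hb : b ∉ S := hp b (by simp)
      have hb' : Reach G S u b := h.adj hadj hb
      rw [Walk.support_cons, List.mem_cons] at hy
      rcases hy with rfl | hy
      · exact h
      · exact ih hb' (fun z hz => hp z (by simp [hz])) y hy

/-- every vertex of `S` has a neighbour in the component of `u`. -/
lemma exists_nbr (hmin : IsMinUVSeparator G u v S) {s : V} (hs : s ∈ S) :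
    ∃ x, Reach G S u x ∧ G.Adj x s := by
  classical
  obtain ⟨⟨huS, hvS, hsep⟩, hminimal⟩ := hmin
  have hT : S \ {s} ⊂ S := Set.sdiff_singleton_ssubset.mpr hs
  have hnotsep := hminimal _ hT
  have hpw : ∃ p : G.Walk u v, ∀ x ∈ p.support, x ∉ S \ {s} := by
    by_contra hcon
    push_neg at hcon
    exact hnotsep ⟨fun h => huS h.1, fun h => hvS h.1, hcon⟩
  obtain ⟨p, hp⟩ := hpw
  obtain ⟨x₀, hx₀s, hx₀S⟩ := hsep p
  have hx₀ : x₀ = s := by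
    have := hp x₀ hx₀s
    simp only [Set.mem_diff, Set.mem_singleton_iff, not_and, not_not] at this
    exact this hx₀S
  subst hx₀
  -- take a minimal walk from u to x₀ avoiding S \ {x₀}
  have hq : ∃ q : G.Walk u x₀, ∀ z ∈ q.support, z ∈ {z' | z' ∉ S \ {x₀}} := by
    exact ⟨p.takeUntil x₀ hx₀s, fun z hz => hp z (p.support_takeUntil_subset hx₀s hz)⟩
  obtain ⟨q, hqK, hqinj, hqadj, hqmin⟩ := exists_minWalk _ hq
  have hlen : 1 ≤ q.length := by
    rcases Nat.eq_zero_or_pos q.length with h0 | h0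
    · exfalso
      have hux : u = x₀ := by
        have h' := q.getVert_of_length_le (i := 0) (Nat.le_of_eq h0)
        rwa [q.getVert_zero] at h'
      exact huS (hux ▸ hx₀S)
    · exact h0
  have hCu : ∀ i, i < q.length → Reach G S u (q.getVert i) := by
    intro i
    induction i with
    | zero => intro _; rw [q.getVert_zero]; exact Reach.self huS
    | succ i ih =>
        intro hi
        have hadj := q.adj_getVert_succ (by omega : i < q.length)
        have hmem : q.getVert (i+1) ∈ {z' | z' ∉ S \ {x₀}} :=
          hqK _ (Walk.mem_support_iff_exists_getVert.mpr ⟨i+1, rfl, by omega⟩)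
        have hne : q.getVert (i+1) ≠ x₀ := by
          intro h
          exact hqinj (i+1) q.length hi (le_refl _) (by rw [h, q.getVert_length])
        have hnotS : q.getVert (i+1) ∉ S := by
          simp only [Set.mem_setOf_eq, Set.mem_diff, Set.mem_singleton_iff, not_and, not_not]
            at hmem
          intro hmem'
          exact hne (hmem hmem')
        exact (ih (by omega)).adj hadj hnotS
  refine ⟨q.getVert (q.length - 1), hCu _ (by omega), ?_⟩
  have := q.adj_getVert_succ (i := q.length - 1) (by omega)
  rw [show q.length - 1 + 1 = q.length by omega, q.getVert_length] at this
  exact this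

end ChordalAux

namespace ChordalAux
variable {V : Type*} {G : SimpleGraph V} {S : Set V} {u v x y w : V}

lemma getVert_takeW : ∀ {a b : V} (p : G.Walk a b) (n i : ℕ), i ≤ n →
    (takeW p n).getVert i = p.getVert i
  | _, _, .nil, n, i, _ => by simp [takeW, Walk.getVert]
  | _, _, .cons _ _, 0, i, hi => by
      simp only [Nat.le_zero] at hi
      subst hi
      simp [takeW, Walk.getVert]
  | _, _, .cons h q, n+1, 0, _ => by simp [takeW, Walk.getVert]
  | _, _, .cons h q, n+1, i+1, hi => by
      simp only [takeW, Walk.getVert_cons_succ]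
      exact getVert_takeW q n i (by omega)

lemma reach_uv_false (hsep : IsSeparator G u v S) (h1 : Reach G S u x)
    (h2 : Reach G S v x) : False := by
  obtain ⟨p, hp⟩ := h1.trans h2.symm
  obtain ⟨z, hz1, hz2⟩ := hsep.2.2 p
  exact hp z hz1 hz2

lemma reach_uv_not_adj (hsep : IsSeparator G u v S) (h1 : Reach G S u x)
    (h2 : Reach G S v y) : ¬ G.Adj x y := fun h =>
  reach_uv_false hsep (h1.adj h h2.not_mem) h2

/-- a minimal separator in a chordal graph is a clique. -/
lemma sep_is_clique (hG : IsChordal G) (hne : u ≠ v) (hmin : IsMinUVSeparator G u v S) :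
    G.IsClique S := by
  classical
  rw [isClique_iff]
  intro s hs t ht hst
  by_contra hnadj
  have hsymm : IsMinUVSeparator G v u S := by
    obtain ⟨⟨h1, h2, h3⟩, h4⟩ := hmin
    refine ⟨⟨h2, h1, fun p => ?_⟩, fun T hT hTsep => h4 T hT ?_⟩
    · obtain ⟨z, hz1, hz2⟩ := h3 p.reverse
      exact ⟨z, by simpa using hz1, hz2⟩
    · obtain ⟨g1, g2, g3⟩ := hTsep
      refine ⟨g2, g1, fun p => ?_⟩
      obtain ⟨z, hz1, hz2⟩ := g3 p.reverse
      exact ⟨z, by simpa using hz1, hz2⟩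
  -- build a walk from s to t through the component of u
  have hwalk : ∀ w : V, IsMinUVSeparator G w v S ∨ IsMinUVSeparator G w u S →
      ∃ p : G.Walk s t, ∀ z ∈ p.support, Reach G S w z ∨ z = s ∨ z = t := by
    intro w hw
    have hminw : ∀ s' ∈ S, ∃ x, Reach G S w x ∧ G.Adj x s' := by
      intro s' hs'
      rcases hw with hw | hw
      · exact exists_nbr hw hs'
      · exact exists_nbr hw hs'
    obtain ⟨xs, hxs, hxsadj⟩ := hminw s hs
    obtain ⟨xt, hxt, hxtadj⟩ := hminw t ht
    obtain ⟨pw, hpw⟩ := hxs.symm.trans hxt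
    have hsupp := hxs.of_walk_support pw hpw
    refine ⟨Walk.cons hxsadj.symm (pw.concat hxtadj), fun z hz => ?_⟩
    rw [Walk.support_cons, List.mem_cons] at hz
    rcases hz with rfl | hz
    · right; left; rfl
    · rw [Walk.support_concat, List.mem_append, List.mem_singleton] at hz
      rcases hz with hz | rfl
      · exact Or.inl (hsupp z hz)
      · right; right; rfl
  obtain ⟨p1', hp1'⟩ := hwalk u (Or.inl hmin)
  obtain ⟨p2', hp2'⟩ := hwalk v (Or.inr hsymm)
  obtain ⟨q1, hq1K, hq1inj, hq1adj, hq1min⟩ :=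
    exists_minWalk {z | Reach G S u z ∨ z = s ∨ z = t} ⟨p1', hp1'⟩
  obtain ⟨q2, hq2K, hq2inj, hq2adj, hq2min⟩ :=
    exists_minWalk {z | Reach G S v z ∨ z = s ∨ z = t} ⟨p2', hp2'⟩
  have hlen : ∀ (q : G.Walk s t), 2 ≤ q.length := by
    intro q
    rcases Nat.lt_or_ge q.length 2 with h | h
    · interval_cases h' : q.length
      · exact absurd (q.eq_of_length_eq_zero h') hst
      · exfalso
        have h2 := q.adj_getVert_succ (i := 0) (by omega)
        rw [q.getVert_zero] at h2
        have h3 : q.getVert (0 + 1) = t := q.getVert_of_length_le (by omega)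
        rw [h3] at h2
        exact hnadj h2
    · exact h
  have hint1 : ∀ i, 0 < i → i < q1.length → Reach G S u (q1.getVert i) := by
    intro i h0 hi
    have hmem := hq1K _ (Walk.mem_support_iff_exists_getVert.mpr ⟨i, rfl, by omega⟩)
    rcases hmem with h | h | h
    · exact h
    · exact absurd (q1.getVert_zero.trans h.symm) (hq1inj 0 i h0 (by omega))
    · exact absurd (h.trans q1.getVert_length.symm) (hq1inj i q1.length hi le_rfl)
  have hint2 : ∀ i, 0 < i → i < q2.length → Reach G S v (q2.getVert i) := by
    intro i h0 hi
    have hmem := hq2K _ (Walk.mem_support_iff_exists_getVert.mpr ⟨i, rfl, by omega⟩)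
    rcases hmem with h | h | h
    · exact h
    · exact absurd (q2.getVert_zero.trans h.symm) (hq2inj 0 i h0 (by omega))
    · exact absurd (h.trans q2.getVert_length.symm) (hq2inj i q2.length hi le_rfl)
  exact no_double_path hG q1 q2 (hlen q1) (hlen q2) hq1inj hq1adj hq2inj hq2adj
    (fun i j h1 h2 h3 h4 heq =>
      reach_uv_false hmin.1 (hint1 i h1 h2) (heq ▸ hint2 j h3 h4))
    (fun i j h1 h2 h3 h4 hadj =>
      reach_uv_not_adj hmin.1 (hint1 i h1 h2) (hint2 j h3 h4) hadj)

end ChordalAux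

namespace ChordalAux
variable {V : Type*} {G : SimpleGraph V} {S : Set V} {u v x y w : V}

/-- in a chordal graph, some vertex of the component of `u` is adjacent to all of `S`. -/
lemma exists_adj_all [Fintype V] (hG : IsChordal G)
    (hmin : IsMinUVSeparator G u v S) (hclique : G.IsClique S) :
    ∃ x, Reach G S u x ∧ ∀ s ∈ S, G.Adj x s := by
  classical
  have huS : u ∉ S := hmin.1.1
  set d : V → ℕ := fun z => (Finset.univ.filter (fun s => s ∈ S ∧ G.Adj z s)).card with hd
  obtain ⟨x₀, hx₀mem, hx₀max⟩ :=
    (Finset.univ.filter (fun z => Reach G S u z)).exists_max_image d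
      ⟨u, by simp [Reach.self huS]⟩
  rw [Finset.mem_filter] at hx₀mem
  have hx₀ : Reach G S u x₀ := hx₀mem.2
  have hx₀max' : ∀ z, Reach G S u z → d z ≤ d x₀ := fun z hz =>
    hx₀max z (by simp [hz])
  by_contra hcon
  push_neg at hcon
  set P : ℕ → Prop := fun n => ∃ x, Reach G S u x ∧ d x = d x₀ ∧ ∃ s, s ∈ S ∧ ¬G.Adj x s ∧
    ∃ p : G.Walk x s, (∀ z ∈ p.support, Reach G S u z ∨ z = s) ∧ p.length = n with hP
  have hPex : ∃ n, P n := by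
    obtain ⟨s, hsS, hs⟩ := hcon x₀ hx₀
    obtain ⟨y, hy, hyadj⟩ := exists_nbr hmin hsS
    obtain ⟨pw, hpw⟩ := hx₀.symm.trans hy
    have hsupp := hx₀.of_walk_support pw hpw
    refine ⟨_, x₀, hx₀, rfl, s, hsS, hs, pw.concat hyadj, fun z hz => ?_, rfl⟩
    rw [Walk.support_concat, List.mem_append, List.mem_singleton] at hz
    rcases hz with hz | rfl
    · exact Or.inl (hsupp z hz)
    · exact Or.inr rfl
  obtain ⟨x, hx, hdx, s, hsS, hxs, p, hpsupp, hplen⟩ := Nat.find_spec hPex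
  obtain ⟨q, hqK, hqinj, hqadj, hqmin⟩ :=
    exists_minWalk {z | Reach G S u z ∨ z = s} ⟨p, fun z hz => hpsupp z hz⟩
  have hqle : q.length ≤ Nat.find hPex := by
    rw [← hplen]; exact hqmin p (fun z hz => hpsupp z hz)
  have hxnS : x ∉ S := hx.not_mem
  have hxs' : x ≠ s := fun h => hxnS (h ▸ hsS)
  have hlen2 : 2 ≤ q.length := by
    rcases Nat.lt_or_ge q.length 2 with h | h
    · interval_cases h' : q.length
      · exact absurd (q.eq_of_length_eq_zero h') hxs'
      · exfalso
        have h2 := q.adj_getVert_succ (i := 0) (by omega)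
        rw [q.getVert_zero] at h2
        have h3 : q.getVert (0 + 1) = s := q.getVert_of_length_le (by omega)
        rw [h3] at h2
        exact hxs h2
    · exact h
  have hint : ∀ i, i < q.length → Reach G S u (q.getVert i) := by
    intro i hi
    have hmem := hqK _ (Walk.mem_support_iff_exists_getVert.mpr ⟨i, rfl, by omega⟩)
    rcases hmem with h | h
    · exact h
    · rcases Nat.eq_zero_or_pos i with rfl | h0
      · rw [q.getVert_zero]; exact hx
      · exact absurd (h.trans q.getVert_length.symm) (hqinj i q.length hi le_rfl)
  set x' := q.getVert 1 with hx'def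
  have hx' : Reach G S u x' := hint 1 (by omega)
  have hadjxx' : G.Adj x x' := by
    have h2 := q.adj_getVert_succ (i := 0) (by omega)
    rwa [q.getVert_zero] at h2
  -- every common neighbour in S of x transfers to x'
  have hstep : ∀ t, t ∈ S → G.Adj x t → G.Adj x' t := by
    intro t htS hxt
    by_contra hx't
    have hts : t ≠ s := fun h => hxs (h ▸ hxt)
    have hadjts : G.Adj t s := hclique htS hsS hts
    have hBex : ∃ b, 1 ≤ b ∧ b ≤ q.length ∧ G.Adj t (q.getVert b) := by
      refine ⟨q.length, by omega, le_rfl, ?_⟩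
      rw [q.getVert_length]; exact hadjts
    obtain ⟨hb1, hb2, hb3⟩ := Nat.find_spec hBex
    set b := Nat.find hBex with hbdef
    have hbmin : ∀ c, c < b → ¬(1 ≤ c ∧ c ≤ q.length ∧ G.Adj t (q.getVert c)) :=
      fun c hc => Nat.find_min hBex hc
    have hb2' : 2 ≤ b := by
      by_contra hcc
      have hb1' : b = 1 := by omega
      rw [hb1'] at hb3
      exact hx't hb3.symm
    have e1 : (Walk.cons hxt (Walk.cons hb3 Walk.nil)).getVert 1 = t := rfl
    have e2 : (Walk.cons hxt (Walk.cons hb3 Walk.nil)).getVert 2 = q.getVert b := rfl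
    have e0 : (Walk.cons hxt (Walk.cons hb3 Walk.nil)).getVert 0 = x := rfl
    have hgb : q.getVert b ∈ {z | Reach G S u z ∨ z = s} :=
      hqK _ (Walk.mem_support_iff_exists_getVert.mpr ⟨b, rfl, by omega⟩)
    refine no_double_path hG (takeW q b)
      (Walk.cons hxt (Walk.cons hb3 Walk.nil)) ?_ (by simp) ?_ ?_ ?_ ?_ ?_ ?_
    · rw [length_takeW]; omega
    · intro i j hij hj
      rw [length_takeW] at hj
      rw [getVert_takeW q b i (by omega), getVert_takeW q b j (by omega)]
      exact hqinj i j hij (by omega)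
    · intro i j hij hj
      rw [length_takeW] at hj
      rw [getVert_takeW q b i (by omega), getVert_takeW q b j (by omega)]
      exact hqadj i j hij (by omega)
    · -- injectivity of the short path x, t, q.getVert b
      intro i j hij hj
      simp only [Walk.length_cons, Walk.length_nil] at hj
      interval_cases j <;> interval_cases i
      · rw [e0, e1]
        intro h
        exact hxnS (h ▸ htS)
      · rw [e0, e2]
        intro h
        exact hqinj 0 b (by omega) (by omega) (q.getVert_zero.symm ▸ h)
      · rw [e1, e2]
        intro h
        rcases hgb with hb | hb
        · exact (h ▸ hb).not_mem htS
        · exact hts (h.trans hb)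
    · -- non-adjacency in the short path: only the pair (0, 2)
      intro i j hij hj
      simp only [Walk.length_cons, Walk.length_nil] at hj
      have hi0 : i = 0 := by omega
      have hj2 : j = 2 := by omega
      subst hi0; subst hj2
      rw [e0, e2]
      have h := hqadj 0 b (by omega) (by omega)
      rwa [q.getVert_zero] at h
    · -- distinctness across the two paths
      intro i j hi hilt hj hjlt
      simp only [Walk.length_cons, Walk.length_nil] at hjlt
      have hj1 : j = 1 := by omega
      subst hj1
      rw [length_takeW] at hilt
      rw [getVert_takeW q b i (by omega), e1]
      intro h
      exact (h ▸ (hint i (by omega))).not_mem htS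
    · -- non-adjacency across the two paths
      intro i j hi hilt hj hjlt
      simp only [Walk.length_cons, Walk.length_nil] at hjlt
      have hj1 : j = 1 := by omega
      subst hj1
      rw [length_takeW] at hilt
      rw [getVert_takeW q b i (by omega), e1]
      intro h
      exact hbmin i (by omega) ⟨by omega, by omega, h.symm⟩
  -- the neighbourhood of x in S is contained in that of x'
  have hsub : (Finset.univ.filter (fun s' => s' ∈ S ∧ G.Adj x s')) ⊆
      (Finset.univ.filter (fun s' => s' ∈ S ∧ G.Adj x' s')) := by
    intro t ht
    rw [Finset.mem_filter] at ht ⊢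
    exact ⟨Finset.mem_univ _, ht.2.1, hstep t ht.2.1 ht.2.2⟩
  have hdeq : (Finset.univ.filter (fun s' => s' ∈ S ∧ G.Adj x s')) =
      (Finset.univ.filter (fun s' => s' ∈ S ∧ G.Adj x' s')) := by
    apply Finset.eq_of_subset_of_card_le hsub
    have h1 : d x' ≤ d x₀ := hx₀max' x' hx'
    rw [← hdx] at h1
    exact h1
  have hx's : ¬ G.Adj x' s := by
    intro h
    have : s ∈ (Finset.univ.filter (fun s' => s' ∈ S ∧ G.Adj x s')) := by
      rw [hdeq, Finset.mem_filter]
      exact ⟨Finset.mem_univ _, hsS, h⟩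
    rw [Finset.mem_filter] at this
    exact hxs this.2.2
  have hdx' : d x' = d x₀ := by
    rw [← hdx]
    simp only [hd]
    rw [hdeq]
  -- shorter walk from x' to s gives the contradiction
  have hPshort : P (q.length - 1) := by
    refine ⟨x', hx', hdx', s, hsS, hx's, (q.drop 1).copy rfl rfl, fun z hz => ?_, ?_⟩
    · rw [Walk.support_copy] at hz
      have hz' := support_drop_subset q 1 hz
      rcases hqK z hz' with h | h
      · exact Or.inl h
      · exact Or.inr h
    · rw [Walk.length_copy, length_drop]
  exact absurd hPshort (Nat.find_min hPex (by omega))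

end ChordalAux


namespace ChordalAux
variable {V : Type*} {G : SimpleGraph V} {S : Set V} {u v : V}

lemma exists_maxClique [Fintype V] (C : Set V) (hC : G.IsClique C) :
    ∃ Q : Set V, IsMaxClique G Q ∧ C ⊆ Q := by
  classical
  obtain ⟨T, hT, hTmax⟩ :=
    (Finset.univ.filter (fun T : Finset V => G.IsClique (T : Set V) ∧ C ⊆ (T : Set V))).exists_max_image
      Finset.card ⟨C.toFinite.toFinset, by
        simp only [Finset.mem_filter, Set.Finite.coe_toFinset]
        exact ⟨Finset.mem_univ _, hC, subset_rfl⟩⟩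
  rw [Finset.mem_filter] at hT
  refine ⟨(T : Set V), ⟨hT.2.1, ?_⟩, hT.2.2⟩
  intro R hR hQR
  have hRfin := R.toFinite
  have hsub : T ⊆ hRfin.toFinset := by
    intro z hz
    rw [Set.Finite.mem_toFinset]
    exact hQR hz
  have hmem : hRfin.toFinset ∈
      (Finset.univ.filter (fun T : Finset V => G.IsClique (T : Set V) ∧ C ⊆ (T : Set V))) := by
    rw [Finset.mem_filter]
    refine ⟨Finset.mem_univ _, ?_, ?_⟩
    · rwa [Set.Finite.coe_toFinset]
    · rw [Set.Finite.coe_toFinset]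
      exact subset_trans hT.2.2 hQR
  have hcard := hTmax _ hmem
  have heq := Finset.eq_of_subset_of_card_le hsub hcard
  rw [← Set.Finite.coe_toFinset hRfin, ← heq]

lemma minsep_symm (hmin : IsMinUVSeparator G u v S) : IsMinUVSeparator G v u S := by
  obtain ⟨⟨h1, h2, h3⟩, h4⟩ := hmin
  refine ⟨⟨h2, h1, fun p => ?_⟩, fun T hT hTsep => h4 T hT ?_⟩
  · obtain ⟨z, hz1, hz2⟩ := h3 p.reverse
    exact ⟨z, by simpa using hz1, hz2⟩
  · obtain ⟨g1, g2, g3⟩ := hTsep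
    refine ⟨g2, g1, fun p => ?_⟩
    obtain ⟨z, hz1, hz2⟩ := g3 p.reverse
    exact ⟨z, by simpa using hz1, hz2⟩

end ChordalAux

end

/-- Every minimal separator of a chordal graph is the intersection of two maximal
cliques. -/
theorem minimal_separator_inter_max_cliques [Fintype V] (G : SimpleGraph V)
    (hG : IsChordal G) (S : Set V) (hS : IsMinimalSeparator G S) :
    ∃ Q R : Set V, IsMaxClique G Q ∧ IsMaxClique G R ∧ Q ≠ R ∧ S = Q ∩ R := by
  classical
  obtain ⟨u, v, hne, hnadj, hmin⟩ := hS
  have hminv : IsMinUVSeparator G v u S := ChordalAux.minsep_symm hmin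
  have hclique := ChordalAux.sep_is_clique hG hne hmin
  obtain ⟨xu, hxu, hxuadj⟩ := ChordalAux.exists_adj_all hG hmin hclique
  obtain ⟨xv, hxv, hxvadj⟩ := ChordalAux.exists_adj_all hG hminv hclique
  have hclu : G.IsClique (insert xu S) :=
    hclique.insert (fun b hb _ => (hxuadj b hb))
  have hclv : G.IsClique (insert xv S) :=
    hclique.insert (fun b hb _ => (hxvadj b hb))
  obtain ⟨Q, hQ, hQsub⟩ := ChordalAux.exists_maxClique _ hclu
  obtain ⟨R, hR, hRsub⟩ := ChordalAux.exists_maxClique _ hclv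
  have hxuQ : xu ∈ Q := hQsub (Set.mem_insert _ _)
  have hxvR : xv ∈ R := hRsub (Set.mem_insert _ _)
  have hSQ : S ⊆ Q := subset_trans (Set.subset_insert _ _) hQsub
  have hSR : S ⊆ R := subset_trans (Set.subset_insert _ _) hRsub
  have hQcomp : ∀ z ∈ Q, z ∉ S → ChordalAux.Reach G S u z := by
    intro z hz hzS
    by_cases hzx : z = xu
    · exact hzx ▸ hxu
    · exact hxu.adj (hQ.1 hxuQ hz (fun h => hzx h.symm)) hzS
  have hRcomp : ∀ z ∈ R, z ∉ S → ChordalAux.Reach G S v z := by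
    intro z hz hzS
    by_cases hzx : z = xv
    · exact hzx ▸ hxv
    · exact hxv.adj (hR.1 hxvR hz (fun h => hzx h.symm)) hzS
  refine ⟨Q, R, hQ, hR, ?_, ?_⟩
  · intro hQR
    have hxuR : xu ∈ R := hQR ▸ hxuQ
    exact ChordalAux.reach_uv_false hmin.1 hxu (hRcomp _ hxuR hxu.not_mem)
  · apply Set.Subset.antisymm
    · exact Set.subset_inter hSQ hSR
    · intro z hz
      by_contra hzS
      exact ChordalAux.reach_uv_false hmin.1 (hQcomp z hz.1 hzS) (hRcomp z hz.2 hzS)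
end

section
/- Let G be a directed path graph, and let u and v be two non-adjacent vertices that have a common neighbor. Then for every clique directed path tree T of G, the path T(u,v) between a clique containing u and a clique containing v is a directed path. -/
open SimpleGraph

variable {V : Type*}

/-- A chordless (induced) path `x 0 - x 1 - ⋯ - x n`: injective, with adjacency exactly
between consecutive vertices. -/
def IsChordlessPathFun (G : SimpleGraph V) {n : ℕ} (x : Fin (n+1) → V) : Prop :=
  Function.Injective x ∧ ∀ i j : Fin (n+1), i < j → (G.Adj (x i) (x j) ↔ (j : ℕ) = (i : ℕ) + 1)

/-- Attachment of type 1 on `{l1,l2}, {r1,r2}` using vertices of `Z`. -/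
def Attach1 (G : SimpleGraph V) (Z : Set V) (l1 l2 r1 r2 : V) : Prop :=
  ∃ z ∈ Z, ∃ z' ∈ Z, z ≠ z' ∧ ¬ G.Adj z z' ∧
    G.Adj z l1 ∧ G.Adj z l2 ∧ G.Adj z r1 ∧ ¬ G.Adj z r2 ∧
    G.Adj z' r1 ∧ G.Adj z' r2 ∧ G.Adj z' l1 ∧ ¬ G.Adj z' l2

/-- Attachment of type 2 on `{l1,l2}, {r1,r2}` using vertices of `Z`, relative to the
set `P = X ∪ Y ∪ {u,v}` of path vertices.  Here `z 0 = l1`, `z (last) = r1` and the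
interior values of `z` are the `2t+1` clique vertices; `z' k` sees exactly
`z k.castSucc` and `z k.succ`. -/
def Attach2 (G : SimpleGraph V) (Z P : Set V) (l1 l2 r1 r2 : V) : Prop :=
  ∃ (t : ℕ) (z : Fin (2*t+3) → V) (z' : Fin (2*t+2) → V),
    z 0 = l1 ∧ z (Fin.last (2*t+2)) = r1 ∧
    Function.Injective z ∧ Function.Injective z' ∧
    (∀ k : Fin (2*t+3), k ≠ 0 → k ≠ Fin.last (2*t+2) → z k ∈ Z) ∧
    (∀ k, z' k ∈ Z) ∧
    G.IsClique ({l1, l2, r1, r2} ∪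
      {w | ∃ k : Fin (2*t+3), k ≠ 0 ∧ k ≠ Fin.last (2*t+2) ∧ z k = w}) ∧
    (∀ k : Fin (2*t+3), k ≠ 0 → k ≠ Fin.last (2*t+2) → ∀ w ∈ P,
      (G.Adj (z k) w ↔ w = l1 ∨ w = l2 ∨ w = r1 ∨ w = r2)) ∧
    (∀ k m : Fin (2*t+2), k ≠ m → ¬ G.Adj (z' k) (z' m)) ∧
    (∀ k : Fin (2*t+2), ∀ w,
      w ∈ P ∪ ({l1, l2, r1, r2} ∪
        {w | ∃ k : Fin (2*t+3), k ≠ 0 ∧ k ≠ Fin.last (2*t+2) ∧ z k = w}) →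
      (G.Adj (z' k) w ↔ w = z k.castSucc ∨ w = z k.succ))

/-- Two non-adjacent vertices `u, v` are linked by a strong path: either they have a
common neighbor, or there are two chordless paths `u-x₁-⋯-x_r-v`, `u-y₁-⋯-y_s-v`
(`r,s ≥ 2`) with disjoint interiors, and a set `Z` disjoint from them, such that every
clique of size four `x_i, x_{i+1}, y_j, y_{j+1}` carries an attachment of type 1 or 2. -/
def LinkedByStrongPath (G : SimpleGraph V) (u v : V) : Prop :=
  (∃ w, G.Adj u w ∧ G.Adj v w) ∨
  (∃ (r s : ℕ), 2 ≤ r ∧ 2 ≤ s ∧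
    ∃ (x : Fin (r+2) → V) (y : Fin (s+2) → V) (Z : Set V),
      x 0 = u ∧ x (Fin.last (r+1)) = v ∧ y 0 = u ∧ y (Fin.last (s+1)) = v ∧
      IsChordlessPathFun G x ∧ IsChordlessPathFun G y ∧
      (∀ i : Fin (r+2), i ≠ 0 → i ≠ Fin.last (r+1) →
        ∀ j : Fin (s+2), j ≠ 0 → j ≠ Fin.last (s+1) → x i ≠ y j) ∧
      Z ∩ (Set.range x ∪ Set.range y) = ∅ ∧
      ∀ i j : ℕ, ∀ _hi1 : 1 ≤ i, ∀ _hi2 : i + 1 ≤ r, ∀ _hj1 : 1 ≤ j, ∀ _hj2 : j + 1 ≤ s,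
        G.Adj (x ⟨i, by omega⟩) (y ⟨j, by omega⟩) →
        G.Adj (x ⟨i, by omega⟩) (y ⟨j+1, by omega⟩) →
        G.Adj (x ⟨i+1, by omega⟩) (y ⟨j, by omega⟩) →
        G.Adj (x ⟨i+1, by omega⟩) (y ⟨j+1, by omega⟩) →
        ∃ l1 l2 r1 r2 : V,
          ((l1 = x ⟨i, by omega⟩ ∧ l2 = y ⟨j, by omega⟩) ∨
           (l1 = y ⟨j, by omega⟩ ∧ l2 = x ⟨i, by omega⟩)) ∧
          ((r1 = x ⟨i+1, by omega⟩ ∧ r2 = y ⟨j+1, by omega⟩) ∨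
           (r1 = y ⟨j+1, by omega⟩ ∧ r2 = x ⟨i+1, by omega⟩)) ∧
          (Attach1 G Z l1 l2 r1 r2 ∨
           Attach2 G Z (Set.range x ∪ Set.range y) l1 l2 r1 r2))

/-- A strong asteroidal triple: an asteroidal triple each pair of which is linked by a
strong path. -/
def IsStrongAsteroidalTriple (G : SimpleGraph V) (a b c : V) : Prop :=
  IsAsteroidalTriple G a b c ∧
    LinkedByStrongPath G a b ∧ LinkedByStrongPath G b c ∧ LinkedByStrongPath G a c

/-- A weak asteroidal triple: an asteroidal triple some pair of which is linked by a
strong path. -/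
def IsWeakAsteroidalTriple (G : SimpleGraph V) (a b c : V) : Prop :=
  IsAsteroidalTriple G a b c ∧
    (LinkedByStrongPath G a b ∨ LinkedByStrongPath G b c ∨ LinkedByStrongPath G a c)

/-- An asteroidal quadruple: four vertices any three of which form an asteroidal triple. -/
def IsAsteroidalQuadruple (G : SimpleGraph V) (a b c d : V) : Prop :=
  IsAsteroidalTriple G a b c ∧ IsAsteroidalTriple G a b d ∧
  IsAsteroidalTriple G a c d ∧ IsAsteroidalTriple G b c d

/-- A weak asteroidal quadruple: four vertices any three of which form a weak
asteroidal triple. -/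
def IsWeakAsteroidalQuadruple (G : SimpleGraph V) (a b c d : V) : Prop :=
  IsWeakAsteroidalTriple G a b c ∧ IsWeakAsteroidalTriple G a b d ∧
  IsWeakAsteroidalTriple G a c d ∧ IsWeakAsteroidalTriple G b c d

/-- A clique directed path tree: a clique tree together with an orientation `D` of its
edges such that for every vertex `w` of `G`, the cliques containing `w` form a directed
path. -/
structure CliqueDPT (G : SimpleGraph V) extends CliqueTree G where
  D : MaxClique G → MaxClique G → Prop
  dadj : ∀ Q R, D Q R → tree.Adj Q R
  total : ∀ Q R, tree.Adj Q R → D Q R ∨ D R Q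
  antisymm : ∀ Q R, D Q R → ¬ D R Q
  dirpath : ∀ w : V, ∃ (n : ℕ) (e : Fin (n+1) ≃ {Q : MaxClique G // w ∈ Q.1}),
    ∀ i : Fin n, D (e i.castSucc).1 (e i.succ).1

/-- A clique rooted path tree: a clique directed path tree whose orientation makes the
tree rooted (every clique is reachable from the root along directed edges). -/
structure CliqueRPT (G : SimpleGraph V) extends CliqueDPT G where
  root : MaxClique G
  rooted : ∀ Q, Relation.ReflTransGen D root Q

/-- A directed path graph: a graph having a clique directed path tree. -/
def DirectedPathGraph (G : SimpleGraph V) : Prop := Nonempty (CliqueDPT G)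

/-- A rooted path graph: a graph having a clique rooted path tree. -/
def RootedPathGraph (G : SimpleGraph V) : Prop := Nonempty (CliqueRPT G)

/-- `T(u,v)` is a directed path: the tree path between the closest cliques containing
`u` resp. `v` (characterized by: `u` only in its first vertex, `v` only in its last)
has all its edges oriented in the same direction. -/
def TuvDirected (G : SimpleGraph V) (T : CliqueDPT G) (u v : V) : Prop :=
  ∃ (n : ℕ) (p : Fin (n+1) → MaxClique G),
    Function.Injective p ∧
    u ∈ (p 0).1 ∧ v ∈ (p (Fin.last n)).1 ∧
    (∀ i, i ≠ (0 : Fin (n+1)) → u ∉ (p i).1) ∧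
    (∀ i, i ≠ Fin.last n → v ∉ (p i).1) ∧
    ((∀ i : Fin n, T.D (p i.castSucc) (p i.succ)) ∨
     (∀ i : Fin n, T.D (p i.succ) (p i.castSucc)))

lemma exists_maxClique_superset [Fintype V] (G : SimpleGraph V) (C : Set V)
    (hC : G.IsClique C) : ∃ Q, IsMaxClique G Q ∧ C ⊆ Q := by
  classical
  have hfin : {R : Set V | G.IsClique R ∧ C ⊆ R}.Finite := Set.toFinite _
  have hne : {R : Set V | G.IsClique R ∧ C ⊆ R}.Nonempty := ⟨C, hC, subset_rfl⟩
  obtain ⟨R, hR, hmax⟩ := Set.Finite.exists_maximalFor Set.ncard _ hfin hne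
  refine ⟨R, ⟨hR.1, ?_⟩, hR.2⟩
  intro R' hR' hsub
  have h1 : R.ncard ≤ R'.ncard := Set.ncard_le_ncard hsub (Set.toFinite _)
  have h2 := @hmax R' ⟨hR', hR.2.trans hsub⟩ h1
  exact Set.eq_of_subset_of_ncard_le hsub h2 (Set.toFinite _)

/-- If `u` and `v` are non-adjacent vertices of a directed path graph having a common
neighbor, then in every clique directed path tree the path `T(u,v)` is directed. -/
theorem common_neighbor_Tuv_directed [Fintype V] (G : SimpleGraph V)
    (hG : DirectedPathGraph G) (u v : V) (huv : u ≠ v) (hadj : ¬ G.Adj u v)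
    (w : V) (hw : G.Adj u w ∧ G.Adj v w) :
    ∀ T : CliqueDPT G, TuvDirected G T u v := by
  classical
  intro T
  obtain ⟨n, e, he⟩ := T.dirpath w
  -- indices of cliques containing u resp. v
  have hdisj : ∀ k : Fin (n+1), u ∈ (e k).1.1 → v ∈ (e k).1.1 → False := by
    intro k hu hv
    exact hadj ((e k).1.2.1 hu hv huv)
  have hcu : G.IsClique {u, w} := by
    intro x hx y hy hxy
    rcases hx with rfl | hx <;> rcases hy with rfl | hy <;>
      simp_all <;> first | exact hw.1 | exact hw.1.symm
  have hcv : G.IsClique {v, w} := by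
    intro x hx y hy hxy
    rcases hx with rfl | hx <;> rcases hy with rfl | hy <;>
      simp_all <;> first | exact hw.2 | exact hw.2.symm
  obtain ⟨Qu, hQu, hsu⟩ := exists_maxClique_superset G _ hcu
  obtain ⟨Qv, hQv, hsv⟩ := exists_maxClique_superset G _ hcv
  have hwu : w ∈ Qu := hsu (by simp)
  have hwv : w ∈ Qv := hsv (by simp)
  have hA : ∃ a : Fin (n+1), u ∈ (e a).1.1 := by
    refine ⟨e.symm ⟨⟨Qu, hQu⟩, hwu⟩, ?_⟩
    rw [Equiv.apply_symm_apply]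
    exact hsu (by simp)
  have hB : ∃ b : Fin (n+1), v ∈ (e b).1.1 := by
    refine ⟨e.symm ⟨⟨Qv, hQv⟩, hwv⟩, ?_⟩
    rw [Equiv.apply_symm_apply]
    exact hsv (by simp)
  -- pick a closest pair
  obtain ⟨⟨a, b⟩, hab, hmin⟩ := Finset.exists_min_image
      (Finset.univ.filter
        (fun q : Fin (n+1) × Fin (n+1) => u ∈ (e q.1).1.1 ∧ v ∈ (e q.2).1.1))
      (fun q => Nat.dist q.1.val q.2.val)
      ⟨(hA.choose, hB.choose), by simp [hA.choose_spec, hB.choose_spec]⟩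
  simp only [Finset.mem_filter, Finset.mem_univ, true_and] at hab
  obtain ⟨hua, hvb⟩ := hab
  have hmin' : ∀ (a' b' : Fin (n+1)), u ∈ (e a').1.1 → v ∈ (e b').1.1 →
      Nat.dist a.val b.val ≤ Nat.dist a'.val b'.val := by
    intro a' b' h1 h2
    exact hmin (a', b') (by simp [h1, h2])
  have hne : a.val ≠ b.val := by
    intro h
    exact hdisj a hua (by rwa [show a = b from Fin.ext h])
  rcases Nat.lt_or_ge a.val b.val with hlt | hge
  · -- forward segment from a to b
    have hf : ∀ k : Fin (b.val - a.val + 1), a.val + k.val < n + 1 := by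
      intro k
      have := k.2; have := b.2; omega
    refine ⟨b.val - a.val, fun k => (e ⟨a.val + k.val, hf k⟩).1, ?_, ?_, ?_, ?_, ?_, ?_⟩
    · intro k k' hkk
      have h1 := e.injective (Subtype.ext hkk)
      have h2 := congrArg Fin.val h1
      simp only at h2
      exact Fin.ext (by omega)
    · have h0 : (⟨a.val + (0 : Fin (b.val - a.val + 1)).val, hf 0⟩ : Fin (n+1)) = a :=
        Fin.ext (by simp)
      simpa [h0] using hua
    · have h0 : (⟨a.val + (Fin.last (b.val - a.val)).val, hf _⟩ : Fin (n+1)) = b :=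
        Fin.ext (by simp [Fin.last]; omega)
      show v ∈ (e ⟨a.val + (Fin.last (b.val - a.val)).val, hf _⟩).1.1
      rw [h0]; exact hvb
    · intro i hi0 hu'
      have hi0' : 0 < i.val := by
        rcases Nat.eq_zero_or_pos i.val with h | h
        · exact absurd (Fin.ext h) hi0
        · exact h
      rcases Nat.lt_or_ge (a.val + i.val) b.val with h | h
      · have := hmin' ⟨a.val + i.val, hf i⟩ b hu' hvb
        simp [Nat.dist] at this
        omega
      · have hib : (⟨a.val + i.val, hf i⟩ : Fin (n+1)) = b := by
          apply Fin.ext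
          have := i.2; simp; omega
        exact hdisj b (by rw [← hib]; exact hu') hvb
    · intro i hi hv'
      have hi' : i.val < b.val - a.val := by
        rcases Nat.lt_or_ge i.val (b.val - a.val) with h | h
        · exact h
        · exact absurd (Fin.ext (by have := i.2; simp [Fin.last]; omega)) hi
      rcases Nat.eq_zero_or_pos i.val with h | h
      · have hia : (⟨a.val + i.val, hf i⟩ : Fin (n+1)) = a := Fin.ext (by simp [h])
        exact hdisj a hua (by rw [← hia]; exact hv')
      · have := hmin' a ⟨a.val + i.val, hf i⟩ hua hv'
        simp [Nat.dist] at this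
        omega
    · left
      intro i
      have hlt2 : a.val + i.val < n := by have := i.2; have := b.2; omega
      exact he ⟨a.val + i.val, hlt2⟩
  · have hgt : b.val < a.val := lt_of_le_of_ne hge (Ne.symm hne)
    -- backward segment from a down to b
    have hf : ∀ k : Fin (a.val - b.val + 1), a.val - k.val < n + 1 := by
      intro k
      have := a.2; omega
    refine ⟨a.val - b.val, fun k => (e ⟨a.val - k.val, hf k⟩).1, ?_, ?_, ?_, ?_, ?_, ?_⟩
    · intro k k' hkk
      have h1 := e.injective (Subtype.ext hkk)
      have h2 := congrArg Fin.val h1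
      simp only at h2
      have := k.2; have := k'.2
      exact Fin.ext (by omega)
    · have h0 : (⟨a.val - (0 : Fin (a.val - b.val + 1)).val, hf 0⟩ : Fin (n+1)) = a :=
        Fin.ext (by simp)
      simpa [h0] using hua
    · have h0 : (⟨a.val - (Fin.last (a.val - b.val)).val, hf _⟩ : Fin (n+1)) = b :=
        Fin.ext (by simp [Fin.last]; omega)
      show v ∈ (e ⟨a.val - (Fin.last (a.val - b.val)).val, hf _⟩).1.1
      rw [h0]; exact hvb
    · intro i hi0 hu'
      have hi0' : 0 < i.val := by
        rcases Nat.eq_zero_or_pos i.val with h | h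
        · exact absurd (Fin.ext h) hi0
        · exact h
      rcases Nat.lt_or_ge b.val (a.val - i.val) with h | h
      · have := hmin' ⟨a.val - i.val, hf i⟩ b hu' hvb
        simp [Nat.dist] at this
        omega
      · have hib : (⟨a.val - i.val, hf i⟩ : Fin (n+1)) = b := by
          apply Fin.ext
          have := i.2; simp; omega
        exact hdisj b (by rw [← hib]; exact hu') hvb
    · intro i hi hv'
      have hi' : i.val < a.val - b.val := by
        rcases Nat.lt_or_ge i.val (a.val - b.val) with h | h
        · exact h
        · exact absurd (Fin.ext (by have := i.2; simp [Fin.last]; omega)) hi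
      rcases Nat.eq_zero_or_pos i.val with h | h
      · have hia : (⟨a.val - i.val, hf i⟩ : Fin (n+1)) = a := Fin.ext (by simp [h])
        exact hdisj a hua (by rw [← hia]; exact hv')
      · have := hmin' a ⟨a.val - i.val, hf i⟩ hua hv'
        simp [Nat.dist] at this
        omega
    · right
      intro i
      have hlt2 : a.val - (i.val + 1) < n := by have := i.2; have := a.2; omega
      have key := he ⟨a.val - (i.val + 1), hlt2⟩
      have h1 : (Fin.castSucc ⟨a.val - (i.val + 1), hlt2⟩ : Fin (n+1)) =
          ⟨a.val - i.succ.val, hf i.succ⟩ := Fin.ext rfl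
      have h2 : (Fin.succ ⟨a.val - (i.val + 1), hlt2⟩ : Fin (n+1)) =
          ⟨a.val - i.castSucc.val, hf i.castSucc⟩ := by
        apply Fin.ext
        have := i.2; simp; omega
      rw [h1, h2] at key
      exact key
end
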